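/- For every x ∈ (0,∞): the series Σ_{k=−∞}^{j−1} ∏_{i=0}^{k} (c_i(x) − 1) converges (absolutely) for every j ∈ ℤ, and the series Σ_{k=j}^{∞} ∏_{i=0}^{k} (d_i(x) − 1) converges (absolutely) for every j ∈ ℤ. Define m_j = Σ_{k=−∞}^{j−1} ∏_{i=0}^{k} (c_i(x) − 1), n_j = x·Σ_{k=j}^{∞} ∏_{i=0}^{k} (d_i(x) − 1), and, with M_i = m_{i+1} − m_{i−1} and N_i = n_{i−1} − n_{i+1}, define a_i = M_i²·N_i/(M_i + N_i)² and b_i = M_i·N_i²/(M_i + N_i)². Then (a, b, m, n) is a positive solution of the ABMN system on ℤ satisfying m_0 − m_{−1} = 1, n_{−1} − n_0 = x, lim_{j→−∞} m_j = 0 and lim_{j→∞} n_j = 0; and it is the unique positive ABMN solution with these four properties. -/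

import Mathlib

/-- The ABMN system on ℤ. -/
def IsABMN (a b m n : ℤ → ℝ) : Prop :=
  (∀ i, 0 ≤ a i) ∧ (∀ i, 0 ≤ b i) ∧
  (∀ i : ℤ, (a i + b i) * (m i + a i) = a i * m (i + 1) + b i * m (i - 1)) ∧
  (∀ i : ℤ, (a i + b i) * (n i + b i) = a i * n (i + 1) + b i * n (i - 1)) ∧
  (∀ i : ℤ, (a i + b i) ^ 2 = b i * (m (i + 1) - m (i - 1))) ∧
  (∀ i : ℤ, (a i + b i) ^ 2 = a i * (n (i - 1) - n (i + 1)))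

/-- `ω(x) = √(8x+1)`. -/
noncomputable def wF (x : ℝ) : ℝ := Real.sqrt (8 * x + 1)

/-- `c(x) = (ω+3)²/16`. -/
noncomputable def cF (x : ℝ) : ℝ := (wF x + 3) ^ 2 / 16

/-- `d(x) = (ω+3)²/(8(ω+1))`. -/
noncomputable def dF (x : ℝ) : ℝ := (wF x + 3) ^ 2 / (8 * (wF x + 1))

/-- `s(x) = (ω−1)²/(4(ω+7))`. -/
noncomputable def sF (x : ℝ) : ℝ := (wF x - 1) ^ 2 / (4 * (wF x + 7))

/-- `s₋₁(x) = 1/s(1/x)`, the inverse of `s`. -/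
noncomputable def sFinv (x : ℝ) : ℝ := 1 / sF (1 / x)

/-- The ℤ-indexed iterates of `s`: `s_k = s^[k]` for `k ≥ 0`, and
`s_{-k} = s₋₁^[k]` for `k ≥ 0`. -/
noncomputable def sIter (k : ℤ) (x : ℝ) : ℝ :=
  if 0 ≤ k then sF^[k.toNat] x else sFinv^[(-k).toNat] x

/-- The two-sided product `∏_{i=0}^{k} h i` for `k : ℤ`: it equals `h 0 ⋯ h k` when
`k ≥ 0`, equals `1` when `k = −1`, and equals `(h (k+1))⁻¹ ⋯ (h (−1))⁻¹` when `k ≤ −2`. -/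
noncomputable def zprod (h : ℤ → ℝ) (k : ℤ) : ℝ :=
  if 0 ≤ k then ∏ i ∈ Finset.range (k.toNat + 1), h i
  else (∏ i ∈ Finset.range ((-k).toNat - 1), h (-1 - (i : ℤ)))⁻¹

/-- `m_j = Σ_{k=−∞}^{j−1} ∏_{i=0}^{k} (c_i(x) − 1)` (summation indexed by `k = j−1−t`). -/
noncomputable def defaultM (x : ℝ) (j : ℤ) : ℝ :=
  ∑' t : ℕ, zprod (fun i => cF (sIter i x) - 1) (j - 1 - t)

/-- `n_j = x · Σ_{k=j}^{∞} ∏_{i=0}^{k} (d_i(x) − 1)` (summation indexed by `k = j+t`). -/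
noncomputable def defaultN (x : ℝ) (j : ℤ) : ℝ :=
  x * ∑' t : ℕ, zprod (fun i => dF (sIter i x) - 1) (j + t)

/-- `M_i = m_{i+1} − m_{i−1}`. -/
noncomputable def defaultMdiff (x : ℝ) (i : ℤ) : ℝ := defaultM x (i + 1) - defaultM x (i - 1)

/-- `N_i = n_{i−1} − n_{i+1}`. -/
noncomputable def defaultNdiff (x : ℝ) (i : ℤ) : ℝ := defaultN x (i - 1) - defaultN x (i + 1)

/-- `a_i = M_i²·N_i/(M_i+N_i)²`. -/
noncomputable def defaultA (x : ℝ) (i : ℤ) : ℝ :=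
  (defaultMdiff x i) ^ 2 * defaultNdiff x i / (defaultMdiff x i + defaultNdiff x i) ^ 2

/-- `b_i = M_i·N_i²/(M_i+N_i)²`. -/
noncomputable def defaultB (x : ℝ) (i : ℤ) : ℝ :=
  defaultMdiff x i * (defaultNdiff x i) ^ 2 / (defaultMdiff x i + defaultNdiff x i) ^ 2
section Basic

lemma wF_gt_one {y : ℝ} (hy : 0 < y) : 1 < wF y := by
  have : (1:ℝ) < 8 * y + 1 := by linarith
  have := Real.lt_sqrt (by norm_num : (0:ℝ) ≤ 1) |>.2 (by linarith : (1:ℝ)^2 < 8*y+1)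
  simpa [wF] using this

lemma wF_sq {y : ℝ} (hy : 0 ≤ y) : wF y ^ 2 = 8 * y + 1 := by
  rw [wF, Real.sq_sqrt]; linarith

lemma sF_pos {y : ℝ} (hy : 0 < y) : 0 < sF y := by
  have h1 := wF_gt_one hy
  have h0 : (0:ℝ) < (wF y - 1)^2 := by nlinarith
  have h2 : (0:ℝ) < 4 * (wF y + 7) := by linarith
  exact div_pos h0 h2

lemma sF_le_half {y : ℝ} (hy : 0 < y) : sF y ≤ y / 2 := by
  have h1 := wF_gt_one hy
  have h2 := wF_sq hy.le
  rw [sF, div_le_iff₀ (by linarith : (0:ℝ) < 4 * (wF y + 7))]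
  nlinarith [sq_nonneg (wF y - 1), sq_nonneg (wF y + 1)]

lemma sFinv_pos {y : ℝ} (hy : 0 < y) : 0 < sFinv y := by
  have h : 0 < sF (1/y) := sF_pos (by positivity)
  rw [sFinv]
  exact div_pos one_pos h

lemma sFinv_ge {y : ℝ} (hy : 0 < y) : 2 * y ≤ sFinv y := by
  have h0 : (0:ℝ) < 1/y := by positivity
  have h1 := sF_pos h0
  have h2 := sF_le_half h0
  rw [sFinv, le_div_iff₀ h1]
  have h3 : 2 * y * sF (1/y) ≤ 2 * y * (1/y/2) := by nlinarith
  have h4 : 2 * y * (1/y/2) = 1 := by field_simp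
  linarith

lemma sF_sFinv {y : ℝ} (hy : 0 < y) : sF (sFinv y) = y := by
  set z := 1 / y with hz
  have hz0 : 0 < z := by positivity
  set w := wF z with hw
  have hw1 : 1 < w := wF_gt_one hz0
  have hw2 : w ^ 2 = 8 * z + 1 := wF_sq hz0.le
  have hwm : w - 1 ≠ 0 := by linarith
  have hw7 : w + 7 ≠ 0 := by linarith
  have hsq : w ^ 2 - 1 ≠ 0 := by nlinarith
  have hsz : sF z = (w - 1)^2 / (4 * (w + 7)) := rfl
  have hszpos : 0 < sF z := sF_pos hz0
  have hinv : sFinv y = 1 / sF z := by rw [sFinv, ← hz]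
  have harg : 8 * (1 / sF z) + 1 = ((w + 15) / (w - 1)) ^ 2 := by
    rw [hsz]; field_simp; ring
  have hwval : wF (1 / sF z) = (w + 15) / (w - 1) := by
    rw [wF, harg, Real.sqrt_sq (le_of_lt (div_pos (by linarith) (by linarith)))]
  have hy' : y = 1 / z := by rw [hz]; field_simp
  rw [hinv, sF, hwval, hy']
  have hne : (w + 15) / (w - 1) + 7 = (8 * w + 8) / (w - 1) := by field_simp; ring
  have hne2 : (w + 15) / (w - 1) - 1 = 16 / (w - 1) := by field_simp; ring
  have hz' : z = (w^2 - 1) / 8 := by rw [hw2]; ring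
  rw [hne, hne2, hz']
  have h8 : (8:ℝ) * w + 8 ≠ 0 := by linarith
  field_simp
  ring

lemma sFinv_sF {y : ℝ} (hy : 0 < y) : sFinv (sF y) = y := by
  have h1 : 0 < sF y := sF_pos hy
  have h2 : 0 < sF (1 / sF y) := sF_pos (by positivity)
  have key : sF (sFinv (1/y)) = 1/y := sF_sFinv (by positivity)
  rw [sFinv] at key ⊢
  rw [one_div_one_div] at key
  rw [key]
  field_simp

end Basic
section Iter

variable {x : ℝ}

lemma sF_iter_pos (hx : 0 < x) (k : ℕ) : 0 < sF^[k] x := by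
  induction k with
  | zero => simpa using hx
  | succ n ih => rw [Function.iterate_succ_apply']; exact sF_pos ih

lemma sFinv_iter_pos (hx : 0 < x) (k : ℕ) : 0 < sFinv^[k] x := by
  induction k with
  | zero => simpa using hx
  | succ n ih => rw [Function.iterate_succ_apply']; exact sFinv_pos ih

lemma sIter_pos (hx : 0 < x) (k : ℤ) : 0 < sIter k x := by
  rw [sIter]
  split
  · exact sF_iter_pos hx _
  · exact sFinv_iter_pos hx _

lemma sIter_step (hx : 0 < x) (k : ℤ) : sIter (k + 1) x = sF (sIter k x) := by
  rcases le_or_gt 0 k with hk | hk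
  · have hk1 : (0:ℤ) ≤ k + 1 := by linarith
    rw [sIter, sIter, if_pos hk1, if_pos hk]
    have : (k+1).toNat = k.toNat + 1 := by omega
    rw [this, Function.iterate_succ_apply']
  · have hk1 : ¬ (0:ℤ) ≤ k + 1 ∨ k + 1 = 0 := by omega
    rcases hk1 with hk1 | hk1
    · rw [sIter, sIter, if_neg hk1, if_neg (by omega : ¬ (0:ℤ) ≤ k)]
      have h2 : (-k).toNat = (-(k+1)).toNat + 1 := by omega
      rw [h2, Function.iterate_succ_apply']
      rw [sF_sFinv (sFinv_iter_pos hx _)]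
    · rw [hk1, sIter, if_pos le_rfl, sIter, if_neg (by omega)]
      have hk' : k = -1 := by omega
      have : (-k).toNat = 1 := by omega
      rw [this]
      simp only [Int.toNat_zero, Function.iterate_zero, id, Function.iterate_one]
      rw [sF_sFinv hx]

lemma sIter_zero : sIter 0 x = x := by simp [sIter]

lemma sIter_neg_eq (x : ℝ) (k : ℕ) : sIter (-(k:ℤ)) x = sFinv^[k] x := by
  rw [sIter]
  split
  · have hk : k = 0 := by omega
    subst hk; simp
  · congr 1; omega

lemma sIter_neg_ge (hx : 0 < x) (k : ℕ) : 2 ^ k * x ≤ sIter (-(k:ℤ)) x := by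
  rw [sIter_neg_eq]
  induction k with
  | zero => simpa using hx
  | succ n ih =>
    have hpos : 0 < sFinv^[n] x := sFinv_iter_pos hx n
    rw [Function.iterate_succ_apply']
    have h2 := sFinv_ge hpos
    calc (2:ℝ) ^ (n+1) * x = 2 * (2^n * x) := by ring
      _ ≤ 2 * sFinv^[n] x := by linarith [ih]
      _ ≤ sFinv (sFinv^[n] x) := h2

lemma sIter_pos_le (hx : 0 < x) (k : ℕ) : sIter (k:ℤ) x ≤ x / 2 ^ k := by
  induction k with
  | zero => simp [sIter_zero]
  | succ n ih =>
    have hpos : 0 < sIter (n:ℤ) x := sIter_pos hx _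
    have hstep : sIter ((n:ℤ)+1) x = sF (sIter (n:ℤ) x) := sIter_step hx _
    have : ((n:ℕ)+1:ℕ) = ((n:ℤ)+1 : ℤ).toNat := by omega
    have hcast : ((((n:ℕ)+1:ℕ)):ℤ) = (n:ℤ) + 1 := by push_cast; ring
    rw [hcast, hstep]
    have := sF_le_half hpos
    calc sF (sIter (n:ℤ) x) ≤ sIter (n:ℤ) x / 2 := this
      _ ≤ (x / 2^n) / 2 := by linarith
      _ = x / 2^(n+1) := by ring

end Iter
section Zprod

variable {h : ℤ → ℝ}

lemma zprod_neg_one : zprod h (-1) = 1 := by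
  rw [zprod, if_neg (by omega)]
  norm_num

lemma zprod_pos (hp : ∀ i, 0 < h i) (k : ℤ) : 0 < zprod h k := by
  rw [zprod]
  split
  · exact Finset.prod_pos fun i _ => hp _
  · exact inv_pos.2 (Finset.prod_pos fun i _ => hp _)

lemma zprod_succ (hne : ∀ i, h i ≠ 0) (k : ℤ) :
    zprod h (k + 1) = zprod h k * h (k + 1) := by
  rcases le_or_gt 0 k with hk | hk
  · rw [zprod, zprod, if_pos (by omega), if_pos hk]
    have h1 : (k+1).toNat + 1 = (k.toNat + 1) + 1 := by omega
    rw [h1, Finset.prod_range_succ]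
    congr 2
    omega
  · rcases eq_or_lt_of_le (by omega : k + 1 ≤ 0) with hk0 | hk0
    · rw [hk0, zprod, if_pos le_rfl, zprod, if_neg (by omega)]
      have hk' : k = -1 := by omega
      subst hk'
      norm_num
    · rw [zprod, zprod, if_neg (by omega), if_neg (by omega)]
      have h1 : (-k).toNat - 1 = ((-(k+1)).toNat - 1) + 1 := by omega
      rw [h1, Finset.prod_range_succ]
      have h2 : (-1 - (((-(k+1)).toNat - 1 : ℕ) : ℤ)) = k + 1 := by omega
      rw [h2, mul_inv]
      rw [inv_mul_cancel_right₀ (hne (k+1))]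

end Zprod
section Seqs

variable {x : ℝ}

lemma cf_sub_one_pos {y : ℝ} (hy : 0 < y) : 0 < cF y - 1 := by
  have h1 := wF_gt_one hy
  rw [cF]
  nlinarith

lemma df_sub_one_pos {y : ℝ} (hy : 0 < y) : 0 < dF y - 1 := by
  have h1 := wF_gt_one hy
  rw [dF]
  rw [lt_sub_iff_add_lt, zero_add, lt_div_iff₀ (by linarith : (0:ℝ) < 8 * (wF y + 1))]
  nlinarith

lemma cf_ge_two {y : ℝ} (hy : 2 ≤ y) : 2 ≤ cF y - 1 := by
  have hy0 : 0 < y := by linarith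
  have h1 := wF_gt_one hy0
  have h2 := wF_sq hy0.le
  have h4 : 4 ≤ wF y := by nlinarith
  rw [cF]
  nlinarith

lemma df_le_half {y : ℝ} (hy0 : 0 < y) (hy : y ≤ 1) : dF y - 1 ≤ 1/2 := by
  have h1 := wF_gt_one hy0
  have h2 := wF_sq hy0.le
  have h3 : wF y ≤ 3 := by nlinarith
  rw [dF, sub_le_iff_le_add, div_le_iff₀ (by linarith : (0:ℝ) < 8 * (wF y + 1))]
  nlinarith

lemma fc_pos (hx : 0 < x) (i : ℤ) : 0 < cF (sIter i x) - 1 :=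
  cf_sub_one_pos (sIter_pos hx i)

lemma gd_pos (hx : 0 < x) (i : ℤ) : 0 < dF (sIter i x) - 1 :=
  df_sub_one_pos (sIter_pos hx i)

lemma summable_c (hx : 0 < x) (j : ℤ) :
    Summable fun t : ℕ => |zprod (fun i => cF (sIter i x) - 1) (j - 1 - t)| := by
  set f : ℤ → ℝ := fun i => cF (sIter i x) - 1 with hf
  have hfp : ∀ i, 0 < f i := fc_pos hx
  have hfne : ∀ i, f i ≠ 0 := fun i => (hfp i).ne'
  obtain ⟨K, hK⟩ := pow_unbounded_of_one_lt (2 / x) (by norm_num : (1:ℝ) < 2)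
  have hKx : 2 ≤ 2 ^ K * x := by
    rw [div_lt_iff₀ hx] at hK
    linarith
  apply summable_of_ratio_norm_eventually_le (show (1:ℝ)/2 < 1 by norm_num)
  filter_upwards [Filter.eventually_ge_atTop (j + K).toNat] with t ht
  have htj : j - 1 - (t:ℤ) ≤ -(K:ℤ) - 1 := by omega
  -- the factor index
  set k : ℤ := j - 1 - (t:ℤ) with hk
  have hfact : 2 ≤ f k := by
    rw [hf]
    apply cf_ge_two
    have hkn : ∃ n : ℕ, K ≤ n ∧ k = -(n:ℤ) := ⟨(-k).toNat, by omega, by omega⟩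
    obtain ⟨n, hn1, hn2⟩ := hkn
    rw [hn2]
    have := sIter_neg_ge hx n
    have h2n : (2:ℝ) ^ K ≤ 2 ^ n := pow_le_pow_right₀ (by norm_num) hn1
    nlinarith [sIter_pos hx (-(n:ℤ))]
  have hsucc : zprod f k = zprod f (k - 1) * f k := by
    have := zprod_succ hfne (k - 1)
    rw [sub_add_cancel] at this
    exact this
  have hk1 : j - 1 - ((t:ℤ) + 1) = k - 1 := by omega
  have hzp := zprod_pos hfp
  rw [Real.norm_eq_abs, Real.norm_eq_abs, abs_abs, abs_abs,
    abs_of_pos (hzp _), abs_of_pos (hzp _)]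
  push_cast [hk1]
  rw [show zprod f (k-1) = zprod f k / f k by rw [hsucc]; field_simp]
  rw [div_le_iff₀ (hfp k)]
  nlinarith [mul_le_mul_of_nonneg_left hfact (le_of_lt (half_pos (hzp k)))]

lemma summable_d (hx : 0 < x) (j : ℤ) :
    Summable fun t : ℕ => |zprod (fun i => dF (sIter i x) - 1) (j + t)| := by
  set g : ℤ → ℝ := fun i => dF (sIter i x) - 1 with hg
  have hgp : ∀ i, 0 < g i := gd_pos hx
  have hgne : ∀ i, g i ≠ 0 := fun i => (hgp i).ne'
  obtain ⟨K, hK⟩ := pow_unbounded_of_one_lt x (by norm_num : (1:ℝ) < 2)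
  apply summable_of_ratio_norm_eventually_le (show (1:ℝ)/2 < 1 by norm_num)
  filter_upwards [Filter.eventually_ge_atTop (K - j).toNat] with t ht
  set k : ℤ := j + (t:ℤ) + 1 with hk
  have hkK : (K:ℤ) ≤ k := by omega
  have hfact : g k ≤ 1/2 := by
    rw [hg]
    have hkn : ∃ n : ℕ, K ≤ n ∧ k = (n:ℤ) := ⟨k.toNat, by omega, by omega⟩
    obtain ⟨n, hn1, hn2⟩ := hkn
    apply df_le_half (sIter_pos hx k)
    rw [hn2]
    have h1 := sIter_pos_le hx n
    have h2n : (2:ℝ) ^ K ≤ 2 ^ n := pow_le_pow_right₀ (by norm_num) hn1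
    have hxK : x ≤ 2 ^ K := hK.le
    have : x / 2^n ≤ 1 := by
      rw [div_le_one (by positivity)]
      linarith
    linarith
  have hsucc : zprod g k = zprod g (k - 1) * g k := by
    have := zprod_succ hgne (k - 1)
    rw [sub_add_cancel] at this
    exact this
  have hk1 : j + ((t:ℤ) + 1) = k ∧ j + (t:ℤ) = k - 1 := by omega
  have hzp := zprod_pos hgp
  rw [Real.norm_eq_abs, Real.norm_eq_abs, abs_abs, abs_abs,
    abs_of_pos (hzp _), abs_of_pos (hzp _)]
  push_cast [hk1.1, hk1.2]
  rw [hsucc]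
  nlinarith [mul_le_mul_of_nonneg_left hfact (le_of_lt (hzp (k-1)))]

end Seqs
section MN

variable {x : ℝ}

lemma defaultM_succ (hx : 0 < x) (j : ℤ) :
    defaultM x (j + 1) = defaultM x j + zprod (fun i => cF (sIter i x) - 1) j := by
  set f : ℤ → ℝ := fun i => cF (sIter i x) - 1 with hf
  have hsum : Summable fun t : ℕ => zprod f (j - t) := by
    refine ((summable_c hx (j+1)).of_abs).congr fun t => ?_
    congr 1; omega
  have h1 : defaultM x (j+1) = ∑' t : ℕ, zprod f (j - t) := by
    rw [defaultM]
    exact tsum_congr fun t => by congr 1; omega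
  rw [h1, Summable.tsum_eq_zero_add hsum]
  have h2 : ∑' t : ℕ, zprod f (j - (t+1:ℕ)) = defaultM x j := by
    rw [defaultM]
    exact tsum_congr fun t => by congr 1; push_cast; ring
  rw [h2]
  simp [add_comm]

lemma defaultN_step (hx : 0 < x) (j : ℤ) :
    defaultN x j = defaultN x (j + 1) + x * zprod (fun i => dF (sIter i x) - 1) j := by
  have hsum : Summable fun t : ℕ => zprod (fun i => dF (sIter i x) - 1) (j + t) :=
    (summable_d hx j).of_abs
  rw [defaultN, Summable.tsum_eq_zero_add hsum, defaultN]
  have h2 : ∑' t : ℕ, zprod (fun i => dF (sIter i x) - 1) (j + ((t:ℕ)+1:ℕ)) =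
      ∑' t : ℕ, zprod (fun i => dF (sIter i x) - 1) (j + 1 + t) :=
    tsum_congr fun t => by congr 1; push_cast; ring
  rw [h2, Nat.cast_zero, add_zero, mul_add, add_comm]

lemma defaultM_pos (hx : 0 < x) (j : ℤ) : 0 < defaultM x j := by
  set f : ℤ → ℝ := fun i => cF (sIter i x) - 1 with hf
  have hsum : Summable fun t : ℕ => zprod f (j - 1 - t) := (summable_c hx j).of_abs
  rw [defaultM]
  exact Summable.tsum_pos hsum (fun t => (zprod_pos (fc_pos hx) _).le) 0 (zprod_pos (fc_pos hx) _)

lemma defaultN_pos (hx : 0 < x) (j : ℤ) : 0 < defaultN x j := by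
  set g : ℤ → ℝ := fun i => dF (sIter i x) - 1 with hg
  have hsum : Summable fun t : ℕ => zprod g (j + t) := (summable_d hx j).of_abs
  rw [defaultN]
  exact mul_pos hx
    (Summable.tsum_pos hsum (fun t => (zprod_pos (gd_pos hx) _).le) 0 (zprod_pos (gd_pos hx) _))

lemma defaultM_mono (hx : 0 < x) {j j' : ℤ} (h : j ≤ j') : defaultM x j ≤ defaultM x j' := by
  have key : ∀ n : ℕ, ∀ j : ℤ, defaultM x j ≤ defaultM x (j + n) := by
    intro n
    induction n with
    | zero => intro j; simp
    | succ p ih =>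
      intro j
      have h1 := ih j
      have h2 := defaultM_succ hx (j + p)
      have h3 : j + (p+1:ℕ) = (j + p) + 1 := by push_cast; ring
      rw [h3, h2]
      have := zprod_pos (fc_pos hx) (j + p)
      linarith
  have := key (j' - j).toNat j
  rwa [show j + ((j'-j).toNat : ℤ) = j' by omega] at this

lemma defaultN_anti (hx : 0 < x) {j j' : ℤ} (h : j ≤ j') : defaultN x j' ≤ defaultN x j := by
  have key : ∀ n : ℕ, ∀ j : ℤ, defaultN x (j + n) ≤ defaultN x j := by
    intro n
    induction n with
    | zero => intro j; simp
    | succ p ih =>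
      intro j
      have h1 := ih j
      have h2 := defaultN_step hx (j + p)
      have h3 : j + (p+1:ℕ) = (j + p) + 1 := by push_cast; ring
      rw [h3]
      have := mul_pos hx (zprod_pos (gd_pos hx) (j + p))
      linarith
  have := key (j' - j).toNat j
  rwa [show j + ((j'-j).toNat : ℤ) = j' by omega] at this

lemma defaultM_tendsto (hx : 0 < x) :
    Filter.Tendsto (defaultM x) Filter.atBot (nhds 0) := by
  set f : ℤ → ℝ := fun i => cF (sIter i x) - 1 with hf
  set h : ℕ → ℝ := fun t => zprod f (-1 - t) with hh
  have htail : Filter.Tendsto (fun T : ℕ => ∑' t : ℕ, h (t + T)) Filter.atTop (nhds 0) :=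
    tendsto_sum_nat_add h
  have hMT : ∀ T : ℕ, defaultM x (-(T:ℤ)) = ∑' t : ℕ, h (t + T) := by
    intro T
    rw [defaultM]
    exact tsum_congr fun t => by rw [hh]; congr 1; push_cast; ring
  rw [NormedAddCommGroup.tendsto_nhds_zero]
  intro ε hε
  rw [NormedAddCommGroup.tendsto_nhds_zero] at htail
  obtain ⟨T, hT⟩ := (htail ε hε).exists_forall_of_atTop
  rw [Filter.eventually_atBot]
  refine ⟨-(T:ℤ), fun j hj => ?_⟩
  have h1 : defaultM x j ≤ defaultM x (-(T:ℤ)) := defaultM_mono hx hj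
  have h2 : 0 < defaultM x j := defaultM_pos hx j
  have h3 := hT T le_rfl
  rw [← hMT T] at h3
  rw [Real.norm_eq_abs, abs_of_pos h2]
  rw [Real.norm_eq_abs, abs_of_pos (defaultM_pos hx _)] at h3
  linarith

lemma defaultN_tendsto (hx : 0 < x) :
    Filter.Tendsto (defaultN x) Filter.atTop (nhds 0) := by
  set g : ℤ → ℝ := fun i => dF (sIter i x) - 1 with hg
  set h : ℕ → ℝ := fun t => x * zprod g (t : ℤ) with hh
  have htail : Filter.Tendsto (fun T : ℕ => ∑' t : ℕ, h (t + T)) Filter.atTop (nhds 0) :=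
    tendsto_sum_nat_add h
  have hNT : ∀ T : ℕ, defaultN x ((T:ℤ)) = ∑' t : ℕ, h (t + T) := by
    intro T
    rw [defaultN, ← tsum_mul_left]
    exact tsum_congr fun t => by rw [hh]; congr 2; push_cast; ring
  rw [NormedAddCommGroup.tendsto_nhds_zero]
  intro ε hε
  rw [NormedAddCommGroup.tendsto_nhds_zero] at htail
  obtain ⟨T, hT⟩ := (htail ε hε).exists_forall_of_atTop
  rw [Filter.eventually_atTop]
  refine ⟨(T:ℤ), fun j hj => ?_⟩
  have h1 : defaultN x j ≤ defaultN x ((T:ℤ)) := defaultN_anti hx hj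
  have h2 : 0 < defaultN x j := defaultN_pos hx j
  have h3 := hT T le_rfl
  rw [← hNT T] at h3
  rw [Real.norm_eq_abs, abs_of_pos h2]
  rw [Real.norm_eq_abs, abs_of_pos (defaultN_pos hx _)] at h3
  linarith

end MN
section Closed

variable {x : ℝ}

lemma key_id1 {y : ℝ} (hy : 0 < y) : y * (dF y - 1) = sF y * (cF y - 1) := by
  have h1 := wF_gt_one hy
  have h2 := wF_sq hy.le
  rw [dF, sF, cF]
  set w := wF y with hw
  have hy' : y = (w^2 - 1)/8 := by rw [h2]; ring
  rw [hy']
  have hne1 : w + 1 ≠ 0 := by linarith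
  have hne2 : w + 7 ≠ 0 := by linarith
  field_simp
  ring

lemma Xdf_cube {X : ℝ} (hX : 0 < X) : X * (dF X - 1) = (wF X - 1)^3/64 := by
  have h1 := wF_gt_one hX
  have h2 := wF_sq hX.le
  rw [dF]
  set w := wF X with hw
  have hX' : X = (w^2-1)/8 := by rw [h2]; ring
  rw [hX']
  have hne1 : w + 1 ≠ 0 := by linarith
  field_simp
  ring

lemma cf_closed {X : ℝ} : cF X - 1 = (wF X - 1) * (wF X + 7) / 16 := by
  rw [cF]; ring

lemma ratio_id (hx : 0 < x) : ∀ i : ℤ,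
    x * zprod (fun i => dF (sIter i x) - 1) (i - 1)
      = sIter i x * zprod (fun i => cF (sIter i x) - 1) (i - 1) := by
  set f : ℤ → ℝ := fun i => cF (sIter i x) - 1 with hf
  set g : ℤ → ℝ := fun i => dF (sIter i x) - 1 with hg
  have hfne : ∀ i, f i ≠ 0 := fun i => (fc_pos hx i).ne'
  have hgne : ∀ i, g i ≠ 0 := fun i => (gd_pos hx i).ne'
  intro i
  induction i using Int.induction_on with
  | zero => rw [sIter_zero]; norm_num [zprod_neg_one]
  | succ k ih =>
    have hstep : sIter ((k:ℤ) + 1) x = sF (sIter k x) := sIter_step hx k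
    have hzf : zprod f ((k:ℤ) + 1 - 1) = zprod f ((k:ℤ) - 1) * f k := by
      rw [show (k:ℤ) + 1 - 1 = ((k:ℤ) - 1) + 1 by ring, zprod_succ hfne, sub_add_cancel]
    have hzg : zprod g ((k:ℤ) + 1 - 1) = zprod g ((k:ℤ) - 1) * g k := by
      rw [show (k:ℤ) + 1 - 1 = ((k:ℤ) - 1) + 1 by ring, zprod_succ hgne, sub_add_cancel]
    have hid := key_id1 (sIter_pos hx (k:ℤ))
    rw [hzf, hzg, hstep]
    have hgk : g (k:ℤ) = dF (sIter k x) - 1 := rfl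
    have hfk : f (k:ℤ) = cF (sIter k x) - 1 := rfl
    rw [hgk, hfk]
    linear_combination (dF (sIter (k:ℤ) x) - 1) * ih + zprod f ((k:ℤ) - 1) * hid
  | pred k ih =>
    have hstep : sIter (-(k:ℤ)) x = sF (sIter (-(k:ℤ) - 1) x) := by
      have := sIter_step hx (-(k:ℤ) - 1)
      rw [sub_add_cancel] at this
      exact this
    have hzf : zprod f (-(k:ℤ) - 1) = zprod f (-(k:ℤ) - 1 - 1) * f (-(k:ℤ) - 1) := by
      rw [show -(k:ℤ) - 1 = (-(k:ℤ) - 1 - 1) + 1 by ring, zprod_succ hfne]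
      ring_nf
    have hzg : zprod g (-(k:ℤ) - 1) = zprod g (-(k:ℤ) - 1 - 1) * g (-(k:ℤ) - 1) := by
      rw [show -(k:ℤ) - 1 = (-(k:ℤ) - 1 - 1) + 1 by ring, zprod_succ hgne]
      ring_nf
    set Y := sIter (-(k:ℤ) - 1) x with hY
    have hYpos : 0 < Y := sIter_pos hx _
    have hid := key_id1 hYpos
    have hgk : g (-(k:ℤ) - 1) = dF Y - 1 := rfl
    have hfk : f (-(k:ℤ) - 1) = cF Y - 1 := rfl
    rw [hzf, hzg, hstep, hgk, hfk] at ih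
    apply mul_right_cancel₀ (show dF Y - 1 ≠ 0 from (df_sub_one_pos hYpos).ne')
    have hsfY : 0 < sF Y := sF_pos hYpos
    calc x * zprod g (-(k:ℤ) - 1 - 1) * (dF Y - 1)
        = sF Y * (zprod f (-(k:ℤ) - 1 - 1) * (cF Y - 1)) := by rw [mul_assoc]; exact ih
      _ = zprod f (-(k:ℤ) - 1 - 1) * (sF Y * (cF Y - 1)) := by ring
      _ = zprod f (-(k:ℤ) - 1 - 1) * (Y * (dF Y - 1)) := by rw [← hid]
      _ = Y * zprod f (-(k:ℤ) - 1 - 1) * (dF Y - 1) := by ring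

end Closed
section ABforms

variable {x : ℝ}

lemma m_step_down (hx : 0 < x) (i : ℤ) :
    defaultM x (i - 1) = defaultM x i - zprod (fun i => cF (sIter i x) - 1) (i - 1) := by
  have := defaultM_succ hx (i - 1)
  rw [sub_add_cancel] at this
  rw [this]
  ring

lemma m_step_up (hx : 0 < x) (i : ℤ) :
    defaultM x (i + 1) = defaultM x i
      + (wF (sIter i x) - 1) * (wF (sIter i x) + 7) / 16
        * zprod (fun i => cF (sIter i x) - 1) (i - 1) := by
  set f : ℤ → ℝ := fun i => cF (sIter i x) - 1 with hf
  have hfne : ∀ i, f i ≠ 0 := fun i => (fc_pos hx i).ne'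
  have h1 := defaultM_succ hx i
  have h2 : zprod f i = zprod f (i - 1) * f i := by
    rw [show i = (i - 1) + 1 by ring, zprod_succ hfne]; ring_nf
  have h3 : f i = (wF (sIter i x) - 1) * (wF (sIter i x) + 7) / 16 := by
    rw [hf]; exact cf_closed
  rw [h1, h2, h3]
  ring

lemma n_step_down (hx : 0 < x) (i : ℤ) :
    defaultN x (i - 1) = defaultN x i
      + (wF (sIter i x) ^ 2 - 1) / 8 * zprod (fun i => cF (sIter i x) - 1) (i - 1) := by
  have h1 := defaultN_step hx (i - 1)
  rw [sub_add_cancel] at h1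
  rw [h1, ratio_id hx i]
  have h2 : sIter i x = (wF (sIter i x) ^ 2 - 1) / 8 := by
    rw [wF_sq (sIter_pos hx i).le]; ring
  rw [← h2]

lemma n_step_up (hx : 0 < x) (i : ℤ) :
    defaultN x (i + 1) = defaultN x i
      - (wF (sIter i x) - 1) ^ 3 / 64 * zprod (fun i => cF (sIter i x) - 1) (i - 1) := by
  set g : ℤ → ℝ := fun i => dF (sIter i x) - 1 with hg
  have hgne : ∀ i, g i ≠ 0 := fun i => (gd_pos hx i).ne'
  have h1 := defaultN_step hx i
  have h2 : zprod g i = zprod g (i - 1) * g i := by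
    rw [show i = (i - 1) + 1 by ring, zprod_succ hgne]; ring_nf
  have hr : x * zprod g (i - 1) = sIter i x * zprod (fun i => cF (sIter i x) - 1) (i-1) :=
    ratio_id hx i
  have h3 : x * zprod g i = sIter i x * zprod (fun i => cF (sIter i x) - 1) (i-1) * g i := by
    rw [h2, ← mul_assoc, hr]
  have h4 : sIter i x * g i = (wF (sIter i x) - 1)^3/64 := by
    rw [hg]; exact Xdf_cube (sIter_pos hx i)
  have h5 : x * zprod g i = (wF (sIter i x) - 1)^3/64
      * zprod (fun i => cF (sIter i x) - 1) (i-1) := by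
    rw [h3]; rw [mul_comm (sIter i x) _, mul_assoc, h4]; ring
  rw [h1, h5]
  ring

lemma Mdiff_closed (hx : 0 < x) (i : ℤ) :
    defaultMdiff x i = (wF (sIter i x) + 3) ^ 2 / 16
      * zprod (fun i => cF (sIter i x) - 1) (i - 1) := by
  rw [defaultMdiff, m_step_up hx i, m_step_down hx i]
  ring

lemma Ndiff_closed (hx : 0 < x) (i : ℤ) :
    defaultNdiff x i = (wF (sIter i x) - 1) * (wF (sIter i x) + 3) ^ 2 / 64
      * zprod (fun i => cF (sIter i x) - 1) (i - 1) := by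
  rw [defaultNdiff, n_step_up hx i, n_step_down hx i]
  ring

lemma A_closed (hx : 0 < x) (i : ℤ) :
    defaultA x i = (wF (sIter i x) - 1) / 4 * zprod (fun i => cF (sIter i x) - 1) (i - 1) := by
  have hW := wF_gt_one (sIter_pos hx i)
  have hU := zprod_pos (fc_pos hx) (i - 1)
  set W := wF (sIter i x) with hWd
  set U := zprod (fun i => cF (sIter i x) - 1) (i - 1) with hUd
  have hsum : 0 < (W + 3)^2/16 * U + (W - 1) * (W + 3)^2/64 * U := by
    have h1 : 0 < (W+3)^2/16*U := mul_pos (div_pos (pow_pos (by linarith) 2) (by norm_num)) hU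
    have h2 : 0 < (W-1)*(W+3)^2/64*U := by
      apply mul_pos _ hU
      apply div_pos _ (by norm_num)
      exact mul_pos (by linarith) (pow_pos (by linarith) 2)
    linarith
  rw [defaultA, Mdiff_closed hx i, Ndiff_closed hx i, ← hWd, ← hUd]
  rw [div_eq_iff (pow_ne_zero 2 hsum.ne')]
  ring

lemma B_closed (hx : 0 < x) (i : ℤ) :
    defaultB x i = (wF (sIter i x) - 1) ^ 2 / 16
      * zprod (fun i => cF (sIter i x) - 1) (i - 1) := by
  have hW := wF_gt_one (sIter_pos hx i)
  have hU := zprod_pos (fc_pos hx) (i - 1)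
  set W := wF (sIter i x) with hWd
  set U := zprod (fun i => cF (sIter i x) - 1) (i - 1) with hUd
  have hsum : 0 < (W + 3)^2/16 * U + (W - 1) * (W + 3)^2/64 * U := by
    have h1 : 0 < (W+3)^2/16*U := mul_pos (div_pos (pow_pos (by linarith) 2) (by norm_num)) hU
    have h2 : 0 < (W-1)*(W+3)^2/64*U := by
      apply mul_pos _ hU
      apply div_pos _ (by norm_num)
      exact mul_pos (by linarith) (pow_pos (by linarith) 2)
    linarith
  rw [defaultB, Mdiff_closed hx i, Ndiff_closed hx i, ← hWd, ← hUd]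
  rw [div_eq_iff (pow_ne_zero 2 hsum.ne')]
  ring

lemma defaultA_pos (hx : 0 < x) (i : ℤ) : 0 < defaultA x i := by
  rw [A_closed hx i]
  have hW := wF_gt_one (sIter_pos hx i)
  exact mul_pos (div_pos (by linarith) (by norm_num)) (zprod_pos (fc_pos hx) _)

lemma defaultB_pos (hx : 0 < x) (i : ℤ) : 0 < defaultB x i := by
  rw [B_closed hx i]
  have hW := wF_gt_one (sIter_pos hx i)
  exact mul_pos (div_pos (pow_pos (by linarith) 2) (by norm_num)) (zprod_pos (fc_pos hx) _)

end ABforms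
section Exist

variable {x : ℝ}

lemma default_isABMN (hx : 0 < x) :
    IsABMN (defaultA x) (defaultB x) (defaultM x) (defaultN x) := by
  refine ⟨fun i => (defaultA_pos hx i).le, fun i => (defaultB_pos hx i).le, ?_, ?_, ?_, ?_⟩
  · intro i
    rw [A_closed hx i, B_closed hx i, m_step_up hx i, m_step_down hx i]
    ring
  · intro i
    rw [A_closed hx i, B_closed hx i, n_step_up hx i, n_step_down hx i]
    have hw2 := wF_sq (sIter_pos hx i).le
    ring
  · intro i
    rw [A_closed hx i, B_closed hx i, m_step_up hx i, m_step_down hx i]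
    ring
  · intro i
    rw [A_closed hx i, B_closed hx i, n_step_up hx i, n_step_down hx i]
    ring

lemma norm_m (hx : 0 < x) : defaultM x 0 - defaultM x (-1) = 1 := by
  have h := defaultM_succ hx (-1)
  rw [show (-1:ℤ) + 1 = 0 by norm_num, zprod_neg_one] at h
  rw [h]
  ring

lemma norm_n (hx : 0 < x) : defaultN x (-1) - defaultN x 0 = x := by
  have h := defaultN_step hx (-1)
  rw [show (-1:ℤ) + 1 = 0 by norm_num, zprod_neg_one] at h
  rw [h]
  ring

end Exist
section Unique

lemma abmn_steps {a b m n : ℤ → ℝ} (h : IsABMN a b m n)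
    (ha : ∀ i, 0 < a i) (hb : ∀ i, 0 < b i) (i : ℤ) :
    m (i+1) - m i = 2 * a i + b i ∧ m i - m (i-1) = (a i)^2 / b i ∧
    n (i-1) - n i = a i + 2 * b i ∧ n i - n (i+1) = (b i)^2 / a i := by
  obtain ⟨-, -, e1, e2, e3, e4⟩ := h
  have hab : 0 < a i + b i := by linarith [ha i, hb i]
  have h1 : a i * (m (i+1) - m i) - b i * (m i - m (i-1)) = a i * (a i + b i) := by
    linear_combination - e1 i
  have h2 : b i * ((m (i+1) - m i) + (m i - m (i-1))) = (a i + b i)^2 := by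
    linear_combination - e3 i
  have hu : m i - m (i-1) = (a i)^2 / b i := by
    rw [eq_div_iff (hb i).ne']
    have key : (a i + b i) * ((m i - m (i-1)) * b i) = (a i + b i) * (a i)^2 := by
      linear_combination a i * h2 - b i * h1
    exact mul_left_cancel₀ hab.ne' key
  have hu' : m (i+1) - m i = 2 * a i + b i := by
    have key : b i * (m (i+1) - m i) = b i * (2 * a i + b i) := by
      have : (m i - m (i-1)) * b i = (a i)^2 := by
        rw [hu, div_mul_cancel₀ _ (hb i).ne']
      linear_combination h2 - this
    exact mul_left_cancel₀ (hb i).ne' key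
  have h3 : b i * (n (i-1) - n i) - a i * (n i - n (i+1)) = b i * (a i + b i) := by
    linear_combination - e2 i
  have h4 : a i * ((n (i-1) - n i) + (n i - n (i+1))) = (a i + b i)^2 := by
    linear_combination - e4 i
  have hv : n (i-1) - n i = a i + 2 * b i := by
    have key : (a i + b i) * (n (i-1) - n i) = (a i + b i) * (a i + 2 * b i) := by
      linear_combination h4 + h3
    exact mul_left_cancel₀ hab.ne' key
  have hv' : n i - n (i+1) = (b i)^2 / a i := by
    rw [eq_div_iff (ha i).ne']
    have key : a i * ((n i - n (i+1)) * a i) = a i * (b i)^2 := by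
      linear_combination a i * h4 - (a i)^2 * hv
    exact mul_left_cancel₀ (ha i).ne' key
  exact ⟨hu', hu, hv, hv'⟩

lemma quad_forward {u v a1 b1 a2 b2 : ℝ} (hu : 0 < u)
    (ha1 : 0 < a1) (hb1 : 0 < b1) (ha2 : 0 < a2) (hb2 : 0 < b2)
    (e11 : a1^2 = b1 * u) (e12 : a1 + 2*b1 = v)
    (e21 : a2^2 = b2 * u) (e22 : a2 + 2*b2 = v) : a1 = a2 ∧ b1 = b2 := by
  have h : (a1 - a2) * (a1 + a2 + u/2) = 0 := by
    linear_combination e11 - e21 + u/2 * e12 - u/2 * e22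
  have ha : a1 = a2 := by
    rcases mul_eq_zero.mp h with h' | h'
    · linarith
    · nlinarith
  refine ⟨ha, by linarith [e12, e22, ha]⟩

lemma quad_backward {u v a1 b1 a2 b2 : ℝ} (hv : 0 < v)
    (ha1 : 0 < a1) (hb1 : 0 < b1) (ha2 : 0 < a2) (hb2 : 0 < b2)
    (e11 : b1^2 = a1 * v) (e12 : 2*a1 + b1 = u)
    (e21 : b2^2 = a2 * v) (e22 : 2*a2 + b2 = u) : a1 = a2 ∧ b1 = b2 := by
  have h : (b1 - b2) * (b1 + b2 + v/2) = 0 := by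
    linear_combination e11 - e21 + v/2 * e12 - v/2 * e22
  have hbq : b1 = b2 := by
    rcases mul_eq_zero.mp h with h' | h'
    · linarith
    · nlinarith
  refine ⟨by linarith [e12, e22, hbq], hbq⟩

end Unique
section Final

variable {x : ℝ}

lemma unique_ab (hx : 0 < x) {a b m n : ℤ → ℝ} (h : IsABMN a b m n)
    (ha : ∀ i, 0 < a i) (hb : ∀ i, 0 < b i)
    (hm0 : m 0 - m (-1) = 1) (hn0 : n (-1) - n 0 = x) :
    ∀ i, a i = defaultA x i ∧ b i = defaultB x i := by
  have hA := defaultA_pos hx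
  have hB := defaultB_pos hx
  have S1 := abmn_steps h ha hb
  have S2 := abmn_steps (default_isABMN hx) hA hB
  intro i
  induction i using Int.induction_on with
  | zero =>
    have e11 : a 0 ^ 2 = b 0 * 1 := by
      have h1 := (S1 0).2.1
      rw [show (0:ℤ) - 1 = -1 by norm_num, hm0, eq_comm, div_eq_iff (hb 0).ne'] at h1
      linear_combination h1
    have e12 : a 0 + 2 * b 0 = x := by
      have h1 := (S1 0).2.2.1
      rw [show (0:ℤ) - 1 = -1 by norm_num, hn0] at h1
      linarith
    have e21 : defaultA x 0 ^ 2 = defaultB x 0 * 1 := by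
      have h1 := (S2 0).2.1
      rw [show (0:ℤ) - 1 = -1 by norm_num, norm_m hx, eq_comm, div_eq_iff (hB 0).ne'] at h1
      linear_combination h1
    have e22 : defaultA x 0 + 2 * defaultB x 0 = x := by
      have h1 := (S2 0).2.2.1
      rw [show (0:ℤ) - 1 = -1 by norm_num, norm_n hx] at h1
      linarith
    exact quad_forward one_pos (ha 0) (hb 0) (hA 0) (hB 0) e11 e12 e21 e22
  | succ k ih =>
    have hUpos : 0 < 2 * a k + b k := by linarith [ha (k:ℤ), hb (k:ℤ)]
    have hVpos : 0 < (b (k:ℤ))^2 / a k := div_pos (pow_pos (hb _) 2) (ha _)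
    have e11 : a ((k:ℤ)+1) ^ 2 = b ((k:ℤ)+1) * (2 * a k + b k) := by
      have h1 := (S1 ((k:ℤ)+1)).2.1
      rw [show (k:ℤ) + 1 - 1 = (k:ℤ) by ring, (S1 (k:ℤ)).1, eq_comm,
        div_eq_iff (hb _).ne'] at h1
      linear_combination h1
    have e12 : a ((k:ℤ)+1) + 2 * b ((k:ℤ)+1) = (b (k:ℤ))^2 / a k := by
      have h1 := (S1 ((k:ℤ)+1)).2.2.1
      rw [show (k:ℤ) + 1 - 1 = (k:ℤ) by ring, (S1 (k:ℤ)).2.2.2] at h1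
      linarith
    have e21 : defaultA x ((k:ℤ)+1) ^ 2 = defaultB x ((k:ℤ)+1) * (2 * a k + b k) := by
      have h1 := (S2 ((k:ℤ)+1)).2.1
      rw [show (k:ℤ) + 1 - 1 = (k:ℤ) by ring, (S2 (k:ℤ)).1, eq_comm,
        div_eq_iff (hB _).ne'] at h1
      rw [← ih.1, ← ih.2] at h1
      linear_combination h1
    have e22 : defaultA x ((k:ℤ)+1) + 2 * defaultB x ((k:ℤ)+1) = (b (k:ℤ))^2 / a k := by
      have h1 := (S2 ((k:ℤ)+1)).2.2.1
      rw [show (k:ℤ) + 1 - 1 = (k:ℤ) by ring, (S2 (k:ℤ)).2.2.2] at h1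
      rw [← ih.1, ← ih.2] at h1
      linarith
    exact quad_forward hUpos (ha _) (hb _) (hA _) (hB _) e11 e12 e21 e22
  | pred k ih =>
    have hUpos : 0 < (a (-(k:ℤ)))^2 / b (-(k:ℤ)) := div_pos (pow_pos (ha _) 2) (hb _)
    have hVpos : 0 < a (-(k:ℤ)) + 2 * b (-(k:ℤ)) := by linarith [ha (-(k:ℤ)), hb (-(k:ℤ))]
    have e11 : b (-(k:ℤ)-1) ^ 2 = a (-(k:ℤ)-1) * (a (-(k:ℤ)) + 2 * b (-(k:ℤ))) := by
      have h1 := (S1 (-(k:ℤ)-1)).2.2.2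
      rw [show -(k:ℤ) - 1 + 1 = -(k:ℤ) by ring, (S1 (-(k:ℤ))).2.2.1, eq_comm,
        div_eq_iff (ha _).ne'] at h1
      linear_combination h1
    have e12 : 2 * a (-(k:ℤ)-1) + b (-(k:ℤ)-1) = (a (-(k:ℤ)))^2 / b (-(k:ℤ)) := by
      have h1 := (S1 (-(k:ℤ)-1)).1
      rw [show -(k:ℤ) - 1 + 1 = -(k:ℤ) by ring] at h1
      have h2 := (S1 (-(k:ℤ))).2.1
      rw [h1] at h2
      linarith
    have e21 : defaultB x (-(k:ℤ)-1) ^ 2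
        = defaultA x (-(k:ℤ)-1) * (a (-(k:ℤ)) + 2 * b (-(k:ℤ))) := by
      have h1 := (S2 (-(k:ℤ)-1)).2.2.2
      rw [show -(k:ℤ) - 1 + 1 = -(k:ℤ) by ring, (S2 (-(k:ℤ))).2.2.1, eq_comm,
        div_eq_iff (hA _).ne'] at h1
      rw [← ih.1, ← ih.2] at h1
      linear_combination h1
    have e22 : 2 * defaultA x (-(k:ℤ)-1) + defaultB x (-(k:ℤ)-1)
        = (a (-(k:ℤ)))^2 / b (-(k:ℤ)) := by
      have h1 := (S2 (-(k:ℤ)-1)).1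
      rw [show -(k:ℤ) - 1 + 1 = -(k:ℤ) by ring] at h1
      have h2 := (S2 (-(k:ℤ))).2.1
      rw [h1] at h2
      rw [← ih.1, ← ih.2] at h2
      linarith
    exact quad_backward hVpos (ha _) (hb _) (hA _) (hB _) e11 e12 e21 e22

end Final
section Final2

variable {x : ℝ}

lemma unique_mn (hx : 0 < x) {a b m n : ℤ → ℝ} (h : IsABMN a b m n)
    (ha : ∀ i, 0 < a i) (hb : ∀ i, 0 < b i)
    (hab : ∀ i, a i = defaultA x i ∧ b i = defaultB x i)
    (htm : Filter.Tendsto m Filter.atBot (nhds 0))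
    (htn : Filter.Tendsto n Filter.atTop (nhds 0)) :
    m = defaultM x ∧ n = defaultN x := by
  have S1 := abmn_steps h ha hb
  have S2 := abmn_steps (default_isABMN hx) (defaultA_pos hx) (defaultB_pos hx)
  have hstepm : ∀ j, m j - m (j-1) = defaultM x j - defaultM x (j-1) := by
    intro j
    rw [(S1 j).2.1, (S2 j).2.1, (hab j).1, (hab j).2]
  have hstepn : ∀ j, n j - n (j+1) = defaultN x j - defaultN x (j+1) := by
    intro j
    rw [(S1 j).2.2.2, (S2 j).2.2.2, (hab j).1, (hab j).2]
  have hconstm : ∀ j, m j - defaultM x j = m 0 - defaultM x 0 := by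
    intro j
    induction j using Int.induction_on with
    | zero => rfl
    | succ k ih =>
      have hs := hstepm ((k:ℤ)+1)
      rw [show (k:ℤ) + 1 - 1 = (k:ℤ) by ring] at hs
      linarith
    | pred k ih =>
      have hs := hstepm (-(k:ℤ))
      linarith
  have hconstn : ∀ j, n j - defaultN x j = n 0 - defaultN x 0 := by
    intro j
    induction j using Int.induction_on with
    | zero => rfl
    | succ k ih =>
      have hs := hstepn (k:ℤ)
      linarith
    | pred k ih =>
      have hs := hstepn (-(k:ℤ)-1)
      rw [show -(k:ℤ) - 1 + 1 = -(k:ℤ) by ring] at hs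
      linarith
  have htDm : Filter.Tendsto (fun j => m j - defaultM x j) Filter.atBot (nhds 0) := by
    simpa using htm.sub (defaultM_tendsto hx)
  have hDm : (fun j : ℤ => m j - defaultM x j) = fun _ => m 0 - defaultM x 0 :=
    funext hconstm
  rw [hDm] at htDm
  have hm0 : m 0 - defaultM x 0 = 0 := tendsto_nhds_unique tendsto_const_nhds htDm
  have htDn : Filter.Tendsto (fun j => n j - defaultN x j) Filter.atTop (nhds 0) := by
    simpa using htn.sub (defaultN_tendsto hx)
  have hDn : (fun j : ℤ => n j - defaultN x j) = fun _ => n 0 - defaultN x 0 :=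
    funext hconstn
  rw [hDn] at htDn
  have hn0 : n 0 - defaultN x 0 = 0 := tendsto_nhds_unique tendsto_const_nhds htDn
  constructor
  · funext j
    have := hconstm j
    linarith
  · funext j
    have := hconstn j
    linarith

end Final2

/-- Existence and uniqueness of the default ABMN solution with central ratio `x`:
the defining series converge absolutely, the quadruple `(a,b,m,n)` built from them is
a positive ABMN solution with `m₀ − m₋₁ = 1`, `n₋₁ − n₀ = x`, `m_{−∞} = 0`, `n_∞ = 0`,
and it is the unique positive ABMN solution with these four properties. -/
theorem default_abmn_solution (x : ℝ) (hx : 0 < x) :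
    (∀ j : ℤ, Summable fun t : ℕ => |zprod (fun i => cF (sIter i x) - 1) (j - 1 - t)|) ∧
    (∀ j : ℤ, Summable fun t : ℕ => |zprod (fun i => dF (sIter i x) - 1) (j + t)|) ∧
    IsABMN (defaultA x) (defaultB x) (defaultM x) (defaultN x) ∧
    (∀ i, 0 < defaultA x i) ∧ (∀ i, 0 < defaultB x i) ∧
    defaultM x 0 - defaultM x (-1) = 1 ∧
    defaultN x (-1) - defaultN x 0 = x ∧
    Filter.Tendsto (defaultM x) Filter.atBot (nhds 0) ∧
    Filter.Tendsto (defaultN x) Filter.atTop (nhds 0) ∧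
    (∀ a b m n : ℤ → ℝ, IsABMN a b m n → (∀ i, 0 < a i) → (∀ i, 0 < b i) →
      m 0 - m (-1) = 1 → n (-1) - n 0 = x →
      Filter.Tendsto m Filter.atBot (nhds 0) → Filter.Tendsto n Filter.atTop (nhds 0) →
      a = defaultA x ∧ b = defaultB x ∧ m = defaultM x ∧ n = defaultN x) := by
  refine ⟨summable_c hx, summable_d hx, default_isABMN hx, defaultA_pos hx, defaultB_pos hx,
    norm_m hx, norm_n hx, defaultM_tendsto hx, defaultN_tendsto hx, ?_⟩
  intro a b m n h ha hb hm0 hn0 htm htn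
  have hab := unique_ab hx h ha hb hm0 hn0
  obtain ⟨hm, hn⟩ := unique_mn hx h ha hb hab htm htn
  exact ⟨funext fun i => (hab i).1, funext fun i => (hab i).2, hm, hn⟩
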